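/- Let F : T → S with right adjoint G, unit an isomorphism, between triangulated categories, with F and G exact. Then S admits a semiorthogonal decomposition ⟨Ker(G), Im(F)⟩: every object B of S sits in a distinguished triangle A₂ → B → A₁ → A₂[1] with A₂ in the essential image of F and A₁ in Ker(G), and Hom(A, K) = 0 for all A ∈ Im(F), K ∈ Ker(G). -/

import Mathlib

open CategoryTheory CategoryTheory.Limits CategoryTheory.Pretriangulated

/-- Bondal's lemma: if `F ⊣ G` is an adjunction of exact functors between triangulated
categories whose unit is an isomorphism, then `S = ⟨Ker G, Im F⟩` is a semiorthogonal
decomposition: every object `B` of `S` sits in a distinguished triangle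
`A₂ ⟶ B ⟶ A₁ ⟶ A₂⟦1⟧` with `A₂ ∈ Im F` and `A₁ ∈ Ker G`, and every morphism from an
object of `Im F` to an object of `Ker G` vanishes. -/
theorem semiorthogonal_decomposition_of_unit_isIso
    {T S : Type*} [Category T] [Category S]
    [HasZeroObject T] [HasZeroObject S] [Preadditive T] [Preadditive S]
    [HasShift T ℤ] [HasShift S ℤ]
    [∀ n : ℤ, (CategoryTheory.shiftFunctor T n).Additive]
    [∀ n : ℤ, (CategoryTheory.shiftFunctor S n).Additive]
    [Pretriangulated T] [Pretriangulated S]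
    (F : T ⥤ S) (G : S ⥤ T) [F.CommShift ℤ] [G.CommShift ℤ]
    [F.IsTriangulated] [G.IsTriangulated]
    (adj : F ⊣ G) (h : IsIso adj.unit) :
    (∀ B : S, ∃ (A₂ A₁ : S) (f : A₂ ⟶ B) (g : B ⟶ A₁) (δ : A₁ ⟶ A₂⟦(1 : ℤ)⟧),
        Triangle.mk f g δ ∈ (distTriang S) ∧ F.essImage A₂ ∧ IsZero (G.obj A₁)) ∧
    (∀ (A K : S) (_ : F.essImage A) (_ : IsZero (G.obj K)) (φ : A ⟶ K), φ = 0) := by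
  constructor
  · intro B
    obtain ⟨A₁, g, δ, hT⟩ := distinguished_cocone_triangle (adj.counit.app B)
    refine ⟨F.obj (G.obj B), A₁, adj.counit.app B, g, δ, hT, ⟨G.obj B, ⟨Iso.refl _⟩⟩, ?_⟩
    have hGT := G.map_distinguished _ hT
    have : IsIso ((G.mapTriangle.obj (Triangle.mk (adj.counit.app B) g δ)).mor₁) := by
      dsimp
      have hcomp : adj.unit.app (G.obj B) ≫ G.map (adj.counit.app B) = 𝟙 _ :=
        adj.right_triangle_components B
      have : IsIso (adj.unit.app (G.obj B)) := NatIso.isIso_app_of_isIso adj.unit _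
      exact @IsIso.of_isIso_fac_left _ _ _ _ _ _ _ _ this (IsIso.id _) hcomp
    exact (G.mapTriangle.obj _).isZero₃_of_isIso₁ hGT this
  · rintro A K ⟨X, ⟨e⟩⟩ hK φ
    have : e.hom ≫ φ = 0 := by
      have := (adj.homEquiv X K).symm_apply_apply (e.hom ≫ φ)
      rw [← this, hK.eq_of_tgt ((adj.homEquiv X K) (e.hom ≫ φ)) 0]
      simp [Adjunction.homEquiv_counit]
    rw [← e.inv_hom_id_assoc φ, this, comp_zero]
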